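/- For every weakly decreasing nonnegative integer sequence (d_1,...,d_n) that is the degree sequence of a simple graph, and all k, l with 1 ≤ k + l ≤ n, we have d_1 + ... + d_k − (d_{n−l+1} + ... + d_n) ≤ k(n−1−l). -/

import Mathlib

open Finset

private lemma fin_filter_sum {n : ℕ} (p : ℕ → Prop) [DecidablePred p] (g : ℕ → ℕ) :
    ∑ a ∈ Finset.univ.filter (fun a : Fin n => p a.val), g a.val
      = ∑ i ∈ (Finset.range n).filter p, g i := by
  rw [Finset.sum_filter, Finset.sum_filter, Fin.sum_univ_eq_sum_range (fun i => if p i then g i else 0)]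

/-- the Fulkerson–Hoffman–McAndrew inequalities hold for any weakly
decreasing degree sequence of a simple graph on `n` vertices. -/
theorem fhm_inequalities (n k l : ℕ) (d : ℕ → ℕ)
    (hdec : ∀ i j, i ≤ j → j < n → d j ≤ d i)
    (G : SimpleGraph (Fin n)) [DecidableRel G.Adj]
    (hdeg : ∀ i : Fin n, G.degree i = d i.val)
    (hkl1 : 1 ≤ k + l) (hkl2 : k + l ≤ n) :
    (∑ i ∈ Finset.range k, (d i : ℤ)) - (∑ i ∈ Finset.Ico (n - l) n, (d i : ℤ))
      ≤ (k : ℤ) * ((n : ℤ) - 1 - (l : ℤ)) := by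
  classical
  rcases Nat.eq_zero_or_pos k with hk | hk
  · subst hk
    have h0 : (0:ℤ) ≤ ∑ i ∈ Finset.Ico (n - l) n, (d i : ℤ) :=
      Finset.sum_nonneg fun i _ => by positivity
    simp only [Finset.range_zero, Finset.sum_empty, Nat.cast_zero, zero_mul, zero_sub]
    linarith
  set A : Finset (Fin n) := Finset.univ.filter (fun a => (a : ℕ) < k) with hAdef
  set B : Finset (Fin n) := Finset.univ.filter (fun a => n - l ≤ (a : ℕ)) with hBdef
  set C : Finset (Fin n) := Finset.univ.filter (fun a => k ≤ (a : ℕ) ∧ (a : ℕ) < n - l) with hCdef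
  have hmemA : ∀ a : Fin n, a ∈ A ↔ (a:ℕ) < k := by intro a; simp [hAdef]
  have hmemB : ∀ a : Fin n, a ∈ B ↔ n - l ≤ (a:ℕ) := by intro a; simp [hBdef]
  have hmemC : ∀ a : Fin n, a ∈ C ↔ k ≤ (a:ℕ) ∧ (a:ℕ) < n - l := by intro a; simp [hCdef]
  -- transfers
  have hfA : (Finset.range n).filter (fun i => i < k) = Finset.range k := by
    ext i; simp only [Finset.mem_filter, Finset.mem_range]; omega
  have hfB : (Finset.range n).filter (fun i => n - l ≤ i) = Finset.Ico (n - l) n := by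
    ext i; simp only [Finset.mem_filter, Finset.mem_range, Finset.mem_Ico]; omega
  have hsumA : ∀ g : ℕ → ℕ, ∑ a ∈ A, g a.val = ∑ i ∈ Finset.range k, g i := by
    intro g
    have h := fin_filter_sum (n := n) (fun i => i < k) g
    rw [hfA] at h
    exact h
  have hsumB : ∀ g : ℕ → ℕ, ∑ a ∈ B, g a.val = ∑ i ∈ Finset.Ico (n-l) n, g i := by
    intro g
    have h := fin_filter_sum (n := n) (fun i => n - l ≤ i) g
    rw [hfB] at h
    exact h
  have hcardA : A.card = k := by
    have := hsumA (fun _ => 1); simpa using this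
  have hcardC : C.card = n - l - k := by
    have : ∑ a ∈ C, (fun _ => 1) a.val = ∑ i ∈ (Finset.range n).filter (fun i => k ≤ i ∧ i < n - l), 1 :=
      fin_filter_sum (n := n) (fun i => k ≤ i ∧ i < n - l) (fun _ => 1)
    have hfC : (Finset.range n).filter (fun i => k ≤ i ∧ i < n - l) = Finset.Ico k (n - l) := by
      ext i; simp only [Finset.mem_filter, Finset.mem_range, Finset.mem_Ico]; omega
    rw [hfC] at this
    simpa [Nat.card_Ico] using this
  -- indicator
  set f : Fin n → Fin n → ℕ := fun a b => if G.Adj a b then 1 else 0 with hfdef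
  have hdegsplit : ∀ a : Fin n,
      G.degree a = ∑ b ∈ A, f a b + ∑ b ∈ C, f a b + ∑ b ∈ B, f a b := by
    intro a
    have huniv : (Finset.univ : Finset (Fin n)) = (A ∪ C) ∪ B := by
      ext b
      simp only [Finset.mem_union, hmemA b, hmemB b, hmemC b, Finset.mem_univ, true_iff]
      omega
    have hd1 : Disjoint A C := by
      rw [Finset.disjoint_left]; intro b hb hb'
      rw [hmemA b] at hb; rw [hmemC b] at hb'; omega
    have hd2 : Disjoint (A ∪ C) B := by
      rw [Finset.disjoint_left]; intro b hb hb'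
      rw [Finset.mem_union, hmemA b, hmemC b] at hb; rw [hmemB b] at hb'
      have := b.isLt; omega
    rw [SimpleGraph.degree, SimpleGraph.neighborFinset_eq_filter, Finset.card_filter,
      huniv, Finset.sum_union hd2, Finset.sum_union hd1]
  -- bound ∑_{a∈A}∑_{b∈A}
  have hAA : ∑ a ∈ A, ∑ b ∈ A, f a b ≤ k * (k - 1) := by
    have : ∀ a ∈ A, ∑ b ∈ A, f a b ≤ k - 1 := by
      intro a ha
      have h1 : ∑ b ∈ A, f a b = (A.filter (fun b => G.Adj a b)).card := by
        rw [Finset.card_filter]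
      rw [h1]
      have h2 : A.filter (fun b => G.Adj a b) ⊆ A.erase a := by
        intro b hb
        rw [Finset.mem_filter] at hb
        exact Finset.mem_erase.mpr ⟨fun h => G.loopless.irrefl a (h ▸ hb.2), hb.1⟩
      calc (A.filter (fun b => G.Adj a b)).card ≤ (A.erase a).card := Finset.card_le_card h2
        _ = k - 1 := by rw [Finset.card_erase_of_mem ha, hcardA]
    calc ∑ a ∈ A, ∑ b ∈ A, f a b ≤ A.card • (k - 1) := Finset.sum_le_card_nsmul _ _ _ this
      _ = k * (k - 1) := by rw [hcardA, smul_eq_mul]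
  -- bound ∑_{a∈A}∑_{b∈C}
  have hAC : ∑ a ∈ A, ∑ b ∈ C, f a b ≤ k * (n - l - k) := by
    have : ∀ a ∈ A, ∑ b ∈ C, f a b ≤ n - l - k := by
      intro a _
      calc ∑ b ∈ C, f a b ≤ ∑ _b ∈ C, 1 := by
            apply Finset.sum_le_sum; intro b _; simp only [hfdef]; split <;> omega
        _ = n - l - k := by rw [Finset.sum_const, smul_eq_mul, mul_one, hcardC]
    calc ∑ a ∈ A, ∑ b ∈ C, f a b ≤ A.card • (n - l - k) := Finset.sum_le_card_nsmul _ _ _ this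
      _ = k * (n - l - k) := by rw [hcardA, smul_eq_mul]
  -- bound ∑_{a∈A}∑_{b∈B}
  have hAB : ∑ a ∈ A, ∑ b ∈ B, f a b ≤ ∑ b ∈ B, G.degree b := by
    rw [Finset.sum_comm]
    apply Finset.sum_le_sum
    intro b _
    have h1 : ∑ a ∈ A, f a b = (A.filter (fun a => G.Adj b a)).card := by
      rw [Finset.card_filter]
      apply Finset.sum_congr rfl
      intro a _
      simp only [hfdef, G.adj_comm]
    rw [h1, SimpleGraph.degree, SimpleGraph.neighborFinset_eq_filter]
    exact Finset.card_le_card (Finset.filter_subset_filter _ (Finset.subset_univ A))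
  -- combine in ℕ
  have hmain : ∑ i ∈ Finset.range k, d i
      ≤ k * (k - 1) + k * (n - l - k) + ∑ i ∈ Finset.Ico (n - l) n, d i := by
    have e1 : ∑ i ∈ Finset.range k, d i = ∑ a ∈ A, G.degree a := by
      rw [← hsumA d]; exact Finset.sum_congr rfl fun a _ => (hdeg a).symm
    have e2 : ∑ i ∈ Finset.Ico (n - l) n, d i = ∑ b ∈ B, G.degree b := by
      rw [← hsumB d]; exact Finset.sum_congr rfl fun a _ => (hdeg a).symm
    rw [e1, e2]
    calc ∑ a ∈ A, G.degree a
        = ∑ a ∈ A, (∑ b ∈ A, f a b + ∑ b ∈ C, f a b + ∑ b ∈ B, f a b) :=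
          Finset.sum_congr rfl fun a _ => hdegsplit a
      _ = ∑ a ∈ A, ∑ b ∈ A, f a b + ∑ a ∈ A, ∑ b ∈ C, f a b + ∑ a ∈ A, ∑ b ∈ B, f a b := by
          rw [Finset.sum_add_distrib, Finset.sum_add_distrib]
      _ ≤ k * (k - 1) + k * (n - l - k) + ∑ b ∈ B, G.degree b := by
          exact Nat.add_le_add (Nat.add_le_add hAA hAC) hAB
  -- cast to ℤ
  have hcast : ((∑ i ∈ Finset.range k, d i : ℕ) : ℤ)
      ≤ ((k * (k - 1) + k * (n - l - k) + ∑ i ∈ Finset.Ico (n - l) n, d i : ℕ) : ℤ) :=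
    Int.ofNat_le.mpr hmain
  push_cast at hcast
  have c1 : ((k - 1 : ℕ) : ℤ) = (k : ℤ) - 1 := by omega
  have c2 : ((n - l - k : ℕ) : ℤ) = (n : ℤ) - l - k := by omega
  rw [c1, c2] at hcast
  nlinarith [hcast]
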